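/- Let f ∈ H² with f(0) ≠ 0, and let {φ_k} be polynomials with deg φ_k = k forming an orthonormal system ⟨φ_j f, φ_k f⟩ = δ_{jk}. Then the n-th optimal polynomial approximant of 1/f satisfies q_n(z) = conj(f(0)) · c_n · φ_n*(z), where c_n is the leading coefficient of φ_n and φ_n*(z) = z^n conj(φ_n(1/conj(z))) is the reverse polynomial. -/

import Mathlib

open scoped BigOperators
open Polynomial Filter

noncomputable section

/-- Coefficient sequence of the product p·f, where f is an analytic function on the disk
given by its Taylor coefficient sequence. -/
def polyMulSeq (p : Polynomial ℂ) (f : ℕ → ℂ) : ℕ → ℂ :=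
  fun n => ∑ j ∈ Finset.range (n + 1), p.coeff j * f (n - j)

/-- The constant function 1 as a Taylor coefficient sequence. -/
def oneSeq : ℕ → ℂ := fun n => if n = 0 then 1 else 0

/-- Membership in the weighted Hardy space H²_ω. -/
def MemHw (ω : ℕ → ℝ) (f : ℕ → ℂ) : Prop :=
  Summable (fun k => ‖f k‖ ^ 2 * ω k)

/-- Squared weighted norm ‖f‖²_ω. -/
def wNormSq (ω : ℕ → ℝ) (f : ℕ → ℂ) : ℝ := ∑' k, ‖f k‖ ^ 2 * ω k

/-- Weighted inner product ⟨f,g⟩_ω. -/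
def wInner (ω : ℕ → ℝ) (f g : ℕ → ℂ) : ℂ :=
  ∑' k, f k * (starRingEnd ℂ) (g k) * (ω k : ℂ)

/-- `q` is the n-th optimal polynomial approximant of 1/f in H²_ω. -/
def IsOPA (ω : ℕ → ℝ) (f : ℕ → ℂ) (n : ℕ) (q : Polynomial ℂ) : Prop :=
  q.natDegree ≤ n ∧
  ∀ p : Polynomial ℂ, p.natDegree ≤ n →
    wNormSq ω (polyMulSeq q f - oneSeq) ≤ wNormSq ω (polyMulSeq p f - oneSeq)

namespace Stmt8Aux

def shiftSeq (j : ℕ) (g : ℕ → ℂ) : ℕ → ℂ := fun n => if j ≤ n then g (n - j) else 0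

def l2 (g : ℕ → ℂ) : Prop := Summable fun k => ‖g k‖ ^ 2

def wI (u v : ℕ → ℂ) : ℂ := ∑' k, u k * (starRingEnd ℂ) (v k)

lemma wInner_eq (u v : ℕ → ℂ) : wInner (fun _ => 1) u v = wI u v := by
  simp [wInner, wI]

lemma wNormSq_eq (u : ℕ → ℂ) : wNormSq (fun _ => 1) u = ∑' k, ‖u k‖ ^ 2 := by
  simp [wNormSq]

lemma memHw_iff (g : ℕ → ℂ) : MemHw (fun _ => 1) g ↔ l2 g := by simp [MemHw, l2]

lemma l2_add {u v : ℕ → ℂ} (hu : l2 u) (hv : l2 v) : l2 (u + v) := by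
  refine Summable.of_nonneg_of_le (fun k => by positivity) (fun k => ?_)
    (((hu.add hv).mul_left 2))
  have h := norm_add_le (u k) (v k)
  have h1 : ‖(u + v) k‖ = ‖u k + v k‖ := rfl
  rw [h1]
  nlinarith [norm_nonneg (u k), norm_nonneg (v k), sq_nonneg (‖u k‖ - ‖v k‖),
    norm_nonneg (u k + v k)]

lemma l2_smul {u : ℕ → ℂ} (hu : l2 u) (a : ℂ) : l2 (a • u) := by
  have : (fun k => ‖(a • u) k‖ ^ 2) = fun k => ‖a‖ ^ 2 * ‖u k‖ ^ 2 := by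
    funext k
    simp [norm_smul, mul_pow]
  rw [l2, this]
  exact hu.mul_left _

lemma l2_shift {g : ℕ → ℂ} (hg : l2 g) (j : ℕ) : l2 (shiftSeq j g) := by
  have key : ∀ m, shiftSeq j g (m + j) = g m := by
    intro m; simp [shiftSeq, Nat.le_add_left]
  refine (summable_nat_add_iff j).mp ?_
  simpa [key, l2] using hg

lemma l2_oneSeq : l2 oneSeq := by
  refine summable_of_ne_finset_zero (s := {0}) (fun b hb => ?_)
  simp only [Finset.mem_singleton] at hb
  simp [oneSeq, hb]

lemma summable_mul_conj {u v : ℕ → ℂ} (hu : l2 u) (hv : l2 v) :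
    Summable fun k => u k * (starRingEnd ℂ) (v k) := by
  refine Summable.of_norm (Summable.of_nonneg_of_le (fun k => norm_nonneg _) (fun k => ?_)
    ((hu.add hv).mul_left (1/2)))
  rw [norm_mul]
  have : ‖(starRingEnd ℂ) (v k)‖ = ‖v k‖ := norm_star _
  rw [this]
  nlinarith [sq_nonneg (‖u k‖ - ‖v k‖), norm_nonneg (u k), norm_nonneg (v k)]

lemma polyMulSeq_eq_sum (p : Polynomial ℂ) (f : ℕ → ℂ) {N : ℕ} (hN : p.natDegree ≤ N) :
    polyMulSeq p f = ∑ j ∈ Finset.range (N + 1), p.coeff j • shiftSeq j f := by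
  funext m
  have e1 : ∑ j ∈ Finset.range (m + 1), p.coeff j * f (m - j)
      = ∑ j ∈ Finset.range (m + 1), p.coeff j * (if j ≤ m then f (m - j) else 0) :=
    Finset.sum_congr rfl fun j hj => by
      rw [if_pos (Nat.lt_succ_iff.mp (Finset.mem_range.mp hj))]
  have e2 : ∑ j ∈ Finset.range (m + 1), p.coeff j * (if j ≤ m then f (m - j) else 0)
      = ∑ j ∈ Finset.range (max N m + 1), p.coeff j * (if j ≤ m then f (m - j) else 0) :=
    Finset.sum_subset (Finset.range_subset_range.2 (by omega)) (fun j hj hj' => by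
      rw [if_neg (by simp only [Finset.mem_range] at hj'; omega), mul_zero])
  have e3 : ∑ j ∈ Finset.range (N + 1), p.coeff j * (if j ≤ m then f (m - j) else 0)
      = ∑ j ∈ Finset.range (max N m + 1), p.coeff j * (if j ≤ m then f (m - j) else 0) :=
    Finset.sum_subset (Finset.range_subset_range.2 (by omega)) (fun j hj hj' => by
      rw [p.coeff_eq_zero_of_natDegree_lt
        (by simp only [Finset.mem_range] at hj'; omega), zero_mul])
  have e4 : (∑ j ∈ Finset.range (N + 1), p.coeff j • shiftSeq j f) m
      = ∑ j ∈ Finset.range (N + 1), p.coeff j * (if j ≤ m then f (m - j) else 0) := by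
    rw [Finset.sum_apply]
    exact Finset.sum_congr rfl fun j _ => by simp [shiftSeq]
  rw [polyMulSeq] at *
  rw [e4, e3, ← e2, ← e1]

lemma polyMulSeq_zero (f : ℕ → ℂ) : polyMulSeq 0 f = 0 := by
  funext m; simp [polyMulSeq]

lemma polyMulSeq_add (p r : Polynomial ℂ) (f : ℕ → ℂ) :
    polyMulSeq (p + r) f = polyMulSeq p f + polyMulSeq r f := by
  funext m
  simp [polyMulSeq, add_mul, Finset.sum_add_distrib]

lemma polyMulSeq_sub (p r : Polynomial ℂ) (f : ℕ → ℂ) :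
    polyMulSeq (p - r) f = polyMulSeq p f - polyMulSeq r f := by
  funext m
  simp [polyMulSeq, sub_mul, Finset.sum_sub_distrib]

lemma polyMulSeq_smul (a : ℂ) (p : Polynomial ℂ) (f : ℕ → ℂ) :
    polyMulSeq (Polynomial.C a * p) f = a • polyMulSeq p f := by
  funext m
  simp [polyMulSeq, mul_assoc, Finset.mul_sum]

lemma polyMulSeq_sum {ι : Type*} (s : Finset ι) (a : ι → ℂ) (g : ι → Polynomial ℂ)
    (f : ℕ → ℂ) :
    polyMulSeq (∑ i ∈ s, Polynomial.C (a i) * g i) f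
      = ∑ i ∈ s, a i • polyMulSeq (g i) f := by
  classical
  induction s using Finset.induction with
  | empty => simpa using polyMulSeq_zero f
  | insert _ _ hx ih =>
    rw [Finset.sum_insert hx, Finset.sum_insert hx, polyMulSeq_add, polyMulSeq_smul, ih]

lemma l2_sum {ι : Type*} (s : Finset ι) (g : ι → ℕ → ℂ) (h : ∀ i ∈ s, l2 (g i)) :
    l2 (∑ i ∈ s, g i) := by
  classical
  induction s using Finset.induction with
  | empty => simp [l2]
  | insert _ _ hx ih =>
    rw [Finset.sum_insert hx]
    exact l2_add (h _ (Finset.mem_insert_self _ _))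
      (ih fun i hi => h i (Finset.mem_insert_of_mem hi))

lemma l2_polyMulSeq {f : ℕ → ℂ} (hf : l2 f) (p : Polynomial ℂ) : l2 (polyMulSeq p f) := by
  rw [polyMulSeq_eq_sum p f le_rfl]
  exact l2_sum _ _ fun j _ => l2_smul (l2_shift hf j) _

lemma wI_add_left {u v w : ℕ → ℂ} (h1 : Summable fun k => u k * (starRingEnd ℂ) (w k))
    (h2 : Summable fun k => v k * (starRingEnd ℂ) (w k)) :
    wI (u + v) w = wI u w + wI v w := by
  simp only [wI, Pi.add_apply, add_mul]
  exact Summable.tsum_add h1 h2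

lemma wI_sub_left {u v w : ℕ → ℂ} (h1 : Summable fun k => u k * (starRingEnd ℂ) (w k))
    (h2 : Summable fun k => v k * (starRingEnd ℂ) (w k)) :
    wI (u - v) w = wI u w - wI v w := by
  simp only [wI, Pi.sub_apply, sub_mul]
  exact Summable.tsum_sub h1 h2

lemma wI_smul_left (a : ℂ) (u w : ℕ → ℂ) : wI (a • u) w = a * wI u w := by
  simp only [wI, Pi.smul_apply, smul_eq_mul, mul_assoc]
  exact tsum_mul_left

lemma wI_conj (u v : ℕ → ℂ) : wI u v = (starRingEnd ℂ) (wI v u) := by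
  rw [wI, wI, starRingEnd_apply, tsum_star]
  exact tsum_congr fun k => by
    rw [starRingEnd_apply, starRingEnd_apply, star_mul', star_star, mul_comm]

lemma wI_sum_left {ι : Type*} (s : Finset ι) (g : ι → ℕ → ℂ) (w : ℕ → ℂ)
    (h : ∀ i ∈ s, Summable fun k => g i k * (starRingEnd ℂ) (w k)) :
    wI (∑ i ∈ s, g i) w = ∑ i ∈ s, wI (g i) w := by
  simp only [wI, Finset.sum_apply, Finset.sum_mul]
  exact Summable.tsum_finsetSum h

lemma wI_sum_right {ι : Type*} (s : Finset ι) (u : ℕ → ℂ) (g : ι → ℕ → ℂ)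
    (h : ∀ i ∈ s, Summable fun k => u k * (starRingEnd ℂ) (g i k)) :
    wI u (∑ i ∈ s, g i) = ∑ i ∈ s, wI u (g i) := by
  simp only [wI, Finset.sum_apply, map_sum, Finset.mul_sum]
  exact Summable.tsum_finsetSum h

lemma wI_smul_right (a : ℂ) (u w : ℕ → ℂ) :
    wI u (a • w) = (starRingEnd ℂ) a * wI u w := by
  simp only [wI, Pi.smul_apply, smul_eq_mul, map_mul]
  rw [← tsum_mul_left]
  exact tsum_congr fun k => by ring

lemma variational {u v : ℕ → ℂ} (hu : l2 u) (hv : l2 v)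
    (h : ∀ t : ℂ, (∑' k, ‖u k‖ ^ 2) ≤ ∑' k, ‖u k + t * v k‖ ^ 2) :
    wI u v = 0 := by
  classical
  set W := wI u v with hWdef
  by_contra hW0
  have hx : Summable fun k => u k * (starRingEnd ℂ) (v k) := summable_mul_conj hu hv
  have pw : ∀ (a b : ℂ), ‖a + b‖ ^ 2
      = ‖a‖ ^ 2 + ‖b‖ ^ 2 + 2 * (a * (starRingEnd ℂ) b).re := by
    intro a b
    have hns : ∀ z : ℂ, ‖z‖ ^ 2 = Complex.normSq z := fun z => by
      rw [Complex.sq_norm]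
    rw [hns, hns, hns, Complex.normSq_add]
  have expand : ∀ t : ℂ, (∑' k, ‖u k + t * v k‖ ^ 2)
      = (∑' k, ‖u k‖ ^ 2) + ‖t‖ ^ 2 * (∑' k, ‖v k‖ ^ 2)
        + 2 * ((starRingEnd ℂ) t * W).re := by
    intro t
    have e : ∀ k, ‖u k + t * v k‖ ^ 2
        = ‖u k‖ ^ 2 + ‖t‖ ^ 2 * ‖v k‖ ^ 2
          + 2 * ((starRingEnd ℂ) t * (u k * (starRingEnd ℂ) (v k))).re := by
      intro k
      rw [pw]
      have : u k * (starRingEnd ℂ) (t * v k)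
          = (starRingEnd ℂ) t * (u k * (starRingEnd ℂ) (v k)) := by
        rw [map_mul]; ring
      rw [this, norm_mul, mul_pow]
    have s1 : Summable fun k => ‖u k‖ ^ 2 := hu
    have s2 : Summable fun k => ‖t‖ ^ 2 * ‖v k‖ ^ 2 := hv.mul_left _
    have s3c : Summable fun k => (starRingEnd ℂ) t * (u k * (starRingEnd ℂ) (v k)) :=
      hx.mul_left _
    have s3 : Summable fun k =>
        2 * ((starRingEnd ℂ) t * (u k * (starRingEnd ℂ) (v k))).re := by
      have : Summable fun k =>
          ((starRingEnd ℂ) t * (u k * (starRingEnd ℂ) (v k))).re := by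
        exact (Complex.hasSum_iff _ _).mp s3c.hasSum |>.1.summable
      exact this.mul_left 2
    calc (∑' k, ‖u k + t * v k‖ ^ 2)
        = ∑' k, (‖u k‖ ^ 2 + ‖t‖ ^ 2 * ‖v k‖ ^ 2
            + 2 * ((starRingEnd ℂ) t * (u k * (starRingEnd ℂ) (v k))).re) :=
          tsum_congr e
      _ = (∑' k, ‖u k‖ ^ 2) + ‖t‖ ^ 2 * (∑' k, ‖v k‖ ^ 2)
            + 2 * ((starRingEnd ℂ) t * W).re := by
          have c2 : (∑' k, ‖t‖ ^ 2 * ‖v k‖ ^ 2) = ‖t‖ ^ 2 * ∑' k, ‖v k‖ ^ 2 :=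
            tsum_mul_left
          have c3 : (∑' k, 2 * ((starRingEnd ℂ) t * (u k * (starRingEnd ℂ) (v k))).re)
              = 2 * ((starRingEnd ℂ) t * W).re := by
            rw [tsum_mul_left]
            congr 1
            rw [← Complex.re_tsum s3c, tsum_mul_left, hWdef]
            rfl
          rw [Summable.tsum_add (s1.add s2) s3, Summable.tsum_add s1 s2, c2, c3]
  set Nv : ℝ := ∑' k, ‖v k‖ ^ 2 with hNv
  have hNv0 : 0 ≤ Nv := tsum_nonneg fun k => sq_nonneg _
  set s : ℝ := 1 / (Nv + 1) with hs
  have hspos : 0 < s := by positivity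
  have hsNv : s * Nv < 1 := by
    rw [hs, div_mul_eq_mul_div, div_lt_one (by linarith)]
    linarith
  have key := h (-(s : ℂ) * W)
  rw [expand] at key
  have hre : ((starRingEnd ℂ) (-(s : ℂ) * W) * W).re = -s * Complex.normSq W := by
    rw [map_mul, map_neg, Complex.conj_ofReal]
    have : -(s : ℂ) * (starRingEnd ℂ) W * W = -(s : ℂ) * ((starRingEnd ℂ) W * W) := by ring
    rw [this]
    have : (starRingEnd ℂ) W * W = (Complex.normSq W : ℂ) := by
      rw [mul_comm, Complex.mul_conj]
    rw [this]
    simp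
  have hnrm : ‖-(s : ℂ) * W‖ ^ 2 = s ^ 2 * Complex.normSq W := by
    rw [norm_mul, mul_pow]
    have h1 : ‖-(s : ℂ)‖ ^ 2 = s ^ 2 := by
      rw [norm_neg, Complex.norm_real, Real.norm_eq_abs, sq_abs]
    have h2 : ‖W‖ ^ 2 = Complex.normSq W := by
      rw [Complex.sq_norm]
    rw [h1, h2]
  rw [hre, hnrm] at key
  have hσ : 0 < Complex.normSq W := Complex.normSq_pos.mpr hW0
  have hprod : (s * Nv) * (s * Complex.normSq W) < 1 * (s * Complex.normSq W) :=
    mul_lt_mul_of_pos_right hsNv (mul_pos hspos hσ)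
  nlinarith [key, hprod, mul_pos hspos hσ]

lemma wI_shift_shift_succ (f : ℕ → ℂ) (hf2 : l2 f) (a b : ℕ) :
    wI (shiftSeq (a + 1) f) (shiftSeq (b + 1) f) = wI (shiftSeq a f) (shiftSeq b f) := by
  rw [wI, wI, Summable.tsum_eq_zero_add (summable_mul_conj (l2_shift hf2 _) (l2_shift hf2 _))]
  have h0 : shiftSeq (a + 1) f 0 = 0 := by simp [shiftSeq]
  have hsucc : ∀ c m, shiftSeq (c + 1) f (m + 1) = shiftSeq c f m := by
    intro c m
    simp [shiftSeq, Nat.succ_sub_succ]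
  rw [h0, zero_mul, zero_add]
  exact tsum_congr fun m => by rw [hsucc, hsucc]

lemma wI_shift_shift_add (f : ℕ → ℂ) (hf2 : l2 f) (a b s : ℕ) :
    wI (shiftSeq (a + s) f) (shiftSeq (b + s) f) = wI (shiftSeq a f) (shiftSeq b f) := by
  induction s with
  | zero => rfl
  | succ s ih =>
    rw [← add_assoc, ← add_assoc, wI_shift_shift_succ f hf2, ih]

lemma wI_shift_eq (f : ℕ → ℂ) (hf2 : l2 f) {a b a' b' : ℕ} (h : a + b' = a' + b) :
    wI (shiftSeq a f) (shiftSeq b f) = wI (shiftSeq a' f) (shiftSeq b' f) := by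
  rcases le_total a a' with hle | hle
  · have hs : a' = a + (a' - a) := by omega
    have ht : b' = b + (a' - a) := by omega
    rw [hs, ht, wI_shift_shift_add f hf2]
  · have hs : a = a' + (a - a') := by omega
    have ht : b = b' + (a - a') := by omega
    rw [hs, ht, wI_shift_shift_add f hf2]

lemma polyMulSeq_X_pow (f : ℕ → ℂ) (m : ℕ) :
    polyMulSeq (Polynomial.X ^ m) f = shiftSeq m f := by
  funext r
  rw [polyMulSeq]
  simp only [Polynomial.coeff_X_pow, ite_mul, one_mul, zero_mul]
  rw [Finset.sum_ite_eq' (Finset.range (r + 1))]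
  simp [shiftSeq, Nat.lt_succ_iff]

lemma span_phi (φ : ℕ → Polynomial ℂ) (hdeg : ∀ k, (φ k).natDegree = k)
    (hc : ∀ k, (φ k).coeff k ≠ 0) :
    ∀ m (p : Polynomial ℂ), p.natDegree ≤ m →
      ∃ a : ℕ → ℂ, p = ∑ k ∈ Finset.range (m + 1), Polynomial.C (a k) * φ k := by
  intro m
  induction m with
  | zero =>
    intro p hp
    refine ⟨fun _ => p.coeff 0 / (φ 0).coeff 0, ?_⟩
    have h0 : φ 0 = Polynomial.C ((φ 0).coeff 0) :=
      Polynomial.eq_C_of_natDegree_le_zero (le_of_eq (hdeg 0))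
    have hp0 : p = Polynomial.C (p.coeff 0) := Polynomial.eq_C_of_natDegree_le_zero hp
    rw [Finset.range_one, Finset.sum_singleton]
    show p = Polynomial.C (p.coeff 0 / (φ 0).coeff 0) * φ 0
    calc p = Polynomial.C (p.coeff 0) := hp0
      _ = Polynomial.C (p.coeff 0 / (φ 0).coeff 0 * (φ 0).coeff 0) := by
          rw [div_mul_cancel₀ _ (hc 0)]
      _ = Polynomial.C (p.coeff 0 / (φ 0).coeff 0) * Polynomial.C ((φ 0).coeff 0) := by
          rw [Polynomial.C_mul]
      _ = Polynomial.C (p.coeff 0 / (φ 0).coeff 0) * φ 0 := by rw [← h0]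
  | succ m ih =>
    intro p hp
    set b : ℂ := p.coeff (m + 1) / (φ (m + 1)).coeff (m + 1) with hb
    set r : Polynomial ℂ := p - Polynomial.C b * φ (m + 1) with hr
    have hrdeg : r.natDegree ≤ m := by
      refine Polynomial.natDegree_le_iff_coeff_eq_zero.mpr fun j hj => ?_
      rw [hr, Polynomial.coeff_sub, Polynomial.coeff_C_mul]
      rcases eq_or_lt_of_le (Nat.succ_le_of_lt hj) with hj' | hj'
      · rw [← hj', hb, div_mul_cancel₀ _ (hc (m + 1)), sub_self]
      · rw [Polynomial.coeff_eq_zero_of_natDegree_lt (lt_of_le_of_lt hp hj'),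
          Polynomial.coeff_eq_zero_of_natDegree_lt (by rw [hdeg]; exact hj'),
          mul_zero, sub_self]
    obtain ⟨a, ha⟩ := ih r hrdeg
    refine ⟨fun k => if k = m + 1 then b else a k, ?_⟩
    rw [Finset.sum_range_succ]
    beta_reduce
    rw [if_pos rfl]
    have : ∑ k ∈ Finset.range (m + 1),
        Polynomial.C (if k = m + 1 then b else a k) * φ k
        = ∑ k ∈ Finset.range (m + 1), Polynomial.C (a k) * φ k :=
      Finset.sum_congr rfl fun k hk => by
        rw [if_neg (by simp only [Finset.mem_range] at hk; omega)]
    rw [this, ← ha, hr]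
    ring

end Stmt8Aux

open Stmt8Aux

/-- In H², q_n = conj(f(0)) · (leading coeff of φ_n) · φ_n*, where φ_n* is the
conjugate-reverse polynomial of the n-th orthonormal polynomial φ_n for |f|²dθ/2π. -/
theorem stmt_8 (f : ℕ → ℂ) (hf : MemHw (fun _ => 1) f) (hf0 : f 0 ≠ 0)
    (n : ℕ) (φ : ℕ → Polynomial ℂ)
    (hdeg : ∀ k, (φ k).natDegree = k)
    (horth : ∀ j k : ℕ,
      wInner (fun _ => 1) (polyMulSeq (φ j) f) (polyMulSeq (φ k) f)
        = if j = k then 1 else 0)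
    (q : Polynomial ℂ) (hq : IsOPA (fun _ => 1) f n q) :
    q = Polynomial.C ((starRingEnd ℂ) (f 0) * (φ n).coeff n) *
          ((φ n).map (starRingEnd ℂ)).reverse := by
  classical
  obtain ⟨hqdeg, hqmin⟩ := hq
  have hf2 : l2 f := (memHw_iff f).mp hf
  have hl2p : ∀ p : Polynomial ℂ, l2 (polyMulSeq p f) := fun p => l2_polyMulSeq hf2 p
  have horth' : ∀ j k, wI (polyMulSeq (φ j) f) (polyMulSeq (φ k) f)
      = if j = k then 1 else 0 := fun j k => by rw [← wInner_eq]; exact horth j k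
  have hφne : ∀ k, φ k ≠ 0 := by
    intro k h0
    have h1 := horth' k k
    rw [h0, polyMulSeq_zero] at h1
    simp [wI] at h1
  have hc : ∀ k, (φ k).coeff k ≠ 0 := by
    intro k
    have h1 := Polynomial.leadingCoeff_ne_zero.mpr (hφne k)
    rwa [Polynomial.leadingCoeff, hdeg k] at h1
  have coord : ∀ (N : ℕ) (a : ℕ → ℂ) (j : ℕ),
      wI (polyMulSeq (∑ k ∈ Finset.range (N + 1), Polynomial.C (a k) * φ k) f)
        (polyMulSeq (φ j) f) = if j ≤ N then a j else 0 := by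
    intro N a j
    rw [polyMulSeq_sum, wI_sum_left _ _ _
      (fun i _ => summable_mul_conj (l2_smul (hl2p (φ i)) (a i)) (hl2p (φ j)))]
    simp only [wI_smul_left, horth']
    have e : ∀ k, a k * (if k = j then (1:ℂ) else 0) = if k = j then a k else 0 :=
      fun k => by by_cases h : k = j <;> simp [h]
    simp only [e]
    rw [Finset.sum_ite_eq' (Finset.range (N + 1)) j a]
    simp [Nat.lt_succ_iff]
  have hq2 : l2 (polyMulSeq q f) := hl2p q
  have hone : l2 oneSeq := l2_oneSeq
  have hu : l2 (polyMulSeq q f - oneSeq) := by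
    have e : polyMulSeq q f - oneSeq = polyMulSeq q f + (-1 : ℂ) • oneSeq := by
      funext m; simp [sub_eq_add_neg]
    rw [e]; exact l2_add hq2 (l2_smul hone _)
  have hres : ∀ k, k ≤ n → wI (polyMulSeq q f - oneSeq) (polyMulSeq (φ k) f) = 0 := by
    intro k hk
    apply variational hu (hl2p (φ k))
    intro t
    have hpdeg : (q + Polynomial.C t * φ k).natDegree ≤ n :=
      le_trans (Polynomial.natDegree_add_le _ _)
        (max_le hqdeg (le_trans (Polynomial.natDegree_C_mul_le t (φ k))
          (by rw [hdeg]; exact hk)))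
    have hmin := hqmin (q + Polynomial.C t * φ k) hpdeg
    rw [wNormSq_eq, wNormSq_eq] at hmin
    have e : ∀ m, (polyMulSeq (q + Polynomial.C t * φ k) f - oneSeq) m
        = (polyMulSeq q f - oneSeq) m + t * polyMulSeq (φ k) f m := by
      intro m
      rw [polyMulSeq_add, polyMulSeq_smul]
      simp only [Pi.add_apply, Pi.sub_apply, Pi.smul_apply, smul_eq_mul]
      ring
    simpa only [e] using hmin
  have hip : ∀ k, k ≤ n → wI (polyMulSeq q f) (polyMulSeq (φ k) f)
      = (starRingEnd ℂ) ((φ k).coeff 0 * f 0) := by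
    intro k hk
    have h1 := hres k hk
    rw [wI_sub_left (summable_mul_conj hq2 (hl2p (φ k)))
      (summable_mul_conj hone (hl2p (φ k)))] at h1
    have h2 : wI oneSeq (polyMulSeq (φ k) f) = (starRingEnd ℂ) ((φ k).coeff 0 * f 0) := by
      rw [wI, tsum_eq_single 0 (fun m hm => by simp [oneSeq, hm])]
      simp [oneSeq, polyMulSeq]
    rw [h2] at h1
    exact sub_eq_zero.mp h1
  set ψ : Polynomial ℂ := ((φ n).map (starRingEnd ℂ)).reverse with hψ
  set α : ℂ := (starRingEnd ℂ) (f 0) * (φ n).coeff n with hα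
  set R : Polynomial ℂ := Polynomial.C α * ψ with hR
  have hmapdeg : ((φ n).map (starRingEnd ℂ)).natDegree = n := by
    rw [Polynomial.natDegree_map_eq_of_injective (RingHom.injective (starRingEnd ℂ)), hdeg]
  have hψdeg : ψ.natDegree ≤ n :=
    le_trans (Polynomial.reverse_natDegree_le _) (le_of_eq hmapdeg)
  have hψcoeff : ∀ j, j ≤ n → ψ.coeff j = (starRingEnd ℂ) ((φ n).coeff (n - j)) := by
    intro j hj
    rw [hψ, Polynomial.coeff_reverse, hmapdeg, Polynomial.revAt_le hj, Polynomial.coeff_map]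
  have hRdeg : R.natDegree ≤ n := le_trans (Polynomial.natDegree_C_mul_le _ _) hψdeg
  have hXm : ∀ m, m ≤ n → wI (polyMulSeq (φ n) f) (shiftSeq m f)
      = if m = n then (starRingEnd ℂ) (((φ n).coeff n)⁻¹) else 0 := by
    intro m hm
    obtain ⟨a, ha⟩ := span_phi φ hdeg hc m (Polynomial.X ^ m)
      (le_of_eq (Polynomial.natDegree_X_pow m))
    rw [← polyMulSeq_X_pow f m, wI_conj, ha, coord m a n]
    by_cases hmn : m = n
    · rw [hmn] at ha ⊢
      rw [if_pos le_rfl, if_pos rfl]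
      congr 1
      have hco := congrArg (fun p : Polynomial ℂ => p.coeff n) ha
      rw [Polynomial.coeff_X_pow, if_pos rfl, Polynomial.finset_sum_coeff,
        Finset.sum_range_succ] at hco
      have hz : ∑ k ∈ Finset.range n, (Polynomial.C (a k) * φ k).coeff n = 0 :=
        Finset.sum_eq_zero fun k hk => by
          rw [Polynomial.coeff_C_mul, Polynomial.coeff_eq_zero_of_natDegree_lt
            (by rw [hdeg]; exact Finset.mem_range.mp hk), mul_zero]
      rw [hz, zero_add, Polynomial.coeff_C_mul] at hco
      exact eq_inv_of_mul_eq_one_left hco.symm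
    · rw [if_neg (by omega), if_neg hmn, map_zero]
  have hpmφ : ∀ k : ℕ, polyMulSeq (φ k) f
      = ∑ j ∈ Finset.range (k + 1), (φ k).coeff j • shiftSeq j f :=
    fun k => polyMulSeq_eq_sum (φ k) f (le_of_eq (hdeg k))
  have hpmR : polyMulSeq R f = ∑ i ∈ Finset.range (n + 1), R.coeff i • shiftSeq i f :=
    polyMulSeq_eq_sum R f hRdeg
  have hB : ∀ j, j ≤ n → wI (polyMulSeq R f) (shiftSeq j f)
      = if j = 0 then α * ((φ n).coeff n)⁻¹ else 0 := by
    intro j hj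
    have hDconj : (starRingEnd ℂ) (wI (polyMulSeq (φ n) f) (shiftSeq (n - j) f))
        = ∑ m ∈ Finset.range (n + 1),
            (starRingEnd ℂ) ((φ n).coeff m) * wI (shiftSeq (n - j) f) (shiftSeq m f) := by
      rw [hpmφ n, wI_sum_left _ _ _ (fun i _ =>
        summable_mul_conj (l2_smul (l2_shift hf2 i) _) (l2_shift hf2 (n - j)))]
      rw [map_sum]
      refine Finset.sum_congr rfl fun m _ => ?_
      rw [wI_smul_left, map_mul, ← wI_conj]
    rw [hpmR, wI_sum_left _ _ _ (fun i _ =>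
      summable_mul_conj (l2_smul (l2_shift hf2 i) _) (l2_shift hf2 j))]
    simp only [wI_smul_left]
    have e1 : ∀ i ∈ Finset.range (n + 1),
        R.coeff i * wI (shiftSeq i f) (shiftSeq j f)
        = α * ((starRingEnd ℂ) ((φ n).coeff (n - i))
            * wI (shiftSeq (n - j) f) (shiftSeq (n - i) f)) := by
      intro i hi
      have hi' : i ≤ n := Nat.lt_succ_iff.mp (Finset.mem_range.mp hi)
      rw [show R.coeff i = α * ψ.coeff i from by rw [hR, Polynomial.coeff_C_mul],
        hψcoeff i hi',
        wI_shift_eq f hf2 (show i + (n - i) = (n - j) + j by omega), mul_assoc]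
    rw [Finset.sum_congr rfl e1, ← Finset.mul_sum]
    have e2 : ∑ i ∈ Finset.range (n + 1),
        (starRingEnd ℂ) ((φ n).coeff (n - i)) * wI (shiftSeq (n - j) f) (shiftSeq (n - i) f)
        = ∑ m ∈ Finset.range (n + 1),
            (starRingEnd ℂ) ((φ n).coeff m) * wI (shiftSeq (n - j) f) (shiftSeq m f) := by
      have h := Finset.sum_range_reflect
        (fun m => (starRingEnd ℂ) ((φ n).coeff m) * wI (shiftSeq (n - j) f) (shiftSeq m f))
        (n + 1)
      simp only [Nat.add_sub_cancel] at h
      exact h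
    rw [e2, ← hDconj, hXm (n - j) (by omega)]
    by_cases hj0 : j = 0
    · rw [if_pos (show n - j = n by omega), if_pos hj0, Complex.conj_conj]
    · rw [if_neg (by omega), if_neg hj0, map_zero, mul_zero]
  have hRk : ∀ k, k ≤ n → wI (polyMulSeq R f) (polyMulSeq (φ k) f)
      = (starRingEnd ℂ) ((φ k).coeff 0 * f 0) := by
    intro k hk
    rw [hpmφ k, wI_sum_right _ _ _ (fun j _ =>
      summable_mul_conj (hl2p R) (l2_smul (l2_shift hf2 j) _))]
    have e : ∀ j ∈ Finset.range (k + 1),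
        wI (polyMulSeq R f) ((φ k).coeff j • shiftSeq j f)
        = if j = 0 then (starRingEnd ℂ) ((φ k).coeff j) * (α * ((φ n).coeff n)⁻¹)
          else 0 := by
      intro j hjmem
      have hjn : j ≤ n := le_trans (Nat.lt_succ_iff.mp (Finset.mem_range.mp hjmem)) hk
      rw [wI_smul_right, hB j hjn]
      by_cases h0 : j = 0
      · rw [if_pos h0, if_pos h0]
      · rw [if_neg h0, if_neg h0, mul_zero]
    rw [Finset.sum_congr rfl e, Finset.sum_ite_eq' (Finset.range (k + 1)) 0
      (fun j => (starRingEnd ℂ) ((φ k).coeff j) * (α * ((φ n).coeff n)⁻¹)),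
      if_pos (Finset.mem_range.mpr (Nat.succ_pos k))]
    have hαc : α * ((φ n).coeff n)⁻¹ = (starRingEnd ℂ) (f 0) := by
      rw [hα, mul_assoc, mul_inv_cancel₀ (hc n), mul_one]
    rw [hαc, ← map_mul]
  set D : Polynomial ℂ := q - R with hD
  have hDdeg : D.natDegree ≤ n :=
    le_trans (Polynomial.natDegree_sub_le q R) (max_le hqdeg hRdeg)
  obtain ⟨a, haD⟩ := span_phi φ hdeg hc n D hDdeg
  have hz : ∀ k, k ≤ n → a k = 0 := by
    intro k hk
    have h1 : wI (polyMulSeq D f) (polyMulSeq (φ k) f) = 0 := by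
      rw [hD, polyMulSeq_sub, wI_sub_left (summable_mul_conj hq2 (hl2p (φ k)))
        (summable_mul_conj (hl2p R) (hl2p (φ k))), hip k hk, hRk k hk, sub_self]
    rw [haD, coord n a k, if_pos hk] at h1
    exact h1
  have hD0 : D = 0 := by
    rw [haD]
    refine Finset.sum_eq_zero fun k hk => ?_
    rw [hz k (Nat.lt_succ_iff.mp (Finset.mem_range.mp hk)), map_zero, zero_mul]
  have hqR : q - R = 0 := by rw [← hD]; exact hD0
  exact sub_eq_zero.mp hqR
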